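/- Let c : I → ℝ be monotone increasing on an interval I, differentiable at h ∈ I. Suppose for every A > c'(h) and every ε > 0 there is a periodic orbit of period ≤ A in the shell {h < H < h + ε}. Then, assuming the shells are contained in a fixed compact set and the Hamiltonian vector field is continuous, the level {H = h} carries a periodic orbit of period ≤ c'(h). (Compactness limit statement: a sequence of T_i-periodic orbits with T_i → T ≤ c'(h), contained in a compact set, contained in shells shrinking to the level {H = h}, has a subsequence converging uniformly to a T-periodic orbit on {H = h}.) -/

import Mathlib

open Set Filter Topology

/-- If `c` is monotone increasing, differentiable at `h` with derivative `c'`, and for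
every `A > c'` and every `ε > 0` there is a periodic orbit of the (continuous) vector
field `X` of period `≤ A`, contained in a fixed compact set, lying in the shell
`{h < H < h + ε}`, then the level `{H = h}` carries a periodic orbit of period `≤ c'`. -/
theorem stmt_8 {E : Type*} [NormedAddCommGroup E] [NormedSpace ℝ E]
    (X : E → E) (hX : Continuous X) (H : E → ℝ) (hH : Continuous H)
    (Kc : Set E) (hKc : IsCompact Kc)
    (I : Set ℝ) (c : ℝ → ℝ) (hmono : MonotoneOn c I)
    (h c' : ℝ) (hhI : h ∈ I) (hderiv : HasDerivWithinAt c c' I h)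
    (horb : ∀ A > c', ∀ ε > 0, ∃ (T : ℝ) (x : ℝ → E),
      0 < T ∧ T ≤ A ∧ Function.Periodic x T ∧
      (∀ t, HasDerivAt x (X (x t)) t) ∧ (∀ t, x t ∈ Kc) ∧
      ∀ t, h < H (x t) ∧ H (x t) < h + ε) :
    ∃ (T : ℝ) (y : ℝ → E), 0 ≤ T ∧ T ≤ c' ∧ Function.Periodic y T ∧
      (∀ t, HasDerivAt y (X (y t)) t) ∧ ∀ t, H (y t) = h := by
  rcases lt_or_ge c' 0 with hc | hc
  · obtain ⟨T, x, hT0, hTle, -, -, -, -⟩ := horb (c' / 2) (by linarith) 1 one_pos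
    linarith
  -- pick a sequence of orbits with periods `≤ c' + 1/(n+1)` in shells of width `1/(n+1)`
  have key : ∀ n : ℕ, ∃ (T : ℝ) (x : ℝ → E), 0 < T ∧ T ≤ c' + 1 / (n + 1) ∧
      Function.Periodic x T ∧ (∀ t, HasDerivAt x (X (x t)) t) ∧ (∀ t, x t ∈ Kc) ∧
      ∀ t, h < H (x t) ∧ H (x t) < h + 1 / (n + 1) := by
    intro n
    have hp : (0 : ℝ) < 1 / (n + 1) := by positivity
    exact horb (c' + 1 / (n + 1)) (by linarith) (1 / (n + 1)) hp
  choose T x hT0 hTle hper hdx hmem hshell using key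
  -- a common Lipschitz constant
  obtain ⟨M, hM⟩ := hKc.exists_bound_of_continuousOn hX.continuousOn
  set L : NNReal := M.toNNReal with hLdef
  have hML : ∀ p ∈ Kc, ‖X p‖ ≤ (L : ℝ) := fun p hp =>
    (hM p hp).trans (by rw [hLdef, Real.coe_toNNReal']; exact le_max_left _ _)
  have hxc : ∀ n, LipschitzWith L (x n) := by
    intro n
    apply lipschitzWith_of_nnnorm_deriv_le (fun t => (hdx n t).differentiableAt)
    intro t
    rw [(hdx n t).deriv]
    exact_mod_cast hML _ (hmem n t)
  -- an ultrafilter extending `atTop`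
  let U : Ultrafilter ℕ := Ultrafilter.of atTop
  have hU : (U : Filter ℕ) ≤ atTop := Ultrafilter.of_le _
  -- pointwise limits along the ultrafilter
  have hyex : ∀ t : ℝ, ∃ p ∈ Kc, Tendsto (fun n => x n t) (U : Filter ℕ) (𝓝 p) := by
    intro t
    obtain ⟨p, hp, hle⟩ := hKc.ultrafilter_le_nhds (U.map fun n => x n t)
      (by rw [Ultrafilter.coe_map, le_principal_iff, mem_map]
          exact univ_mem' fun n => hmem n t)
    exact ⟨p, hp, by rwa [Ultrafilter.coe_map] at hle⟩
  choose y hyK hy using hyex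
  -- limit of the periods
  obtain ⟨T₀, hT₀mem, hT₀⟩ : ∃ T₀ ∈ Icc (0 : ℝ) (c' + 1),
      Tendsto T (U : Filter ℕ) (𝓝 T₀) := by
    obtain ⟨p, hp, hle⟩ := (isCompact_Icc (a := (0:ℝ)) (b := c' + 1)).ultrafilter_le_nhds (U.map T)
      (by rw [Ultrafilter.coe_map, le_principal_iff, mem_map]
          refine univ_mem' fun n => ⟨(hT0 n).le, (hTle n).trans ?_⟩
          have h1 : (1 : ℝ) ≤ (n : ℝ) + 1 := by
            have := Nat.cast_nonneg (α := ℝ) n; linarith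
          have h2 : (1 : ℝ) / ((n : ℝ) + 1) ≤ 1 := by
            rw [div_le_one (by positivity)]; exact h1
          linarith)
    exact ⟨p, hp, by rwa [Ultrafilter.coe_map] at hle⟩
  have hT₀le : T₀ ≤ c' := by
    by_contra hcon
    push_neg at hcon
    set ε := (T₀ - c') / 2 with hεdef
    have hε : 0 < ε := by simp only [hεdef]; linarith
    have hev : ∀ᶠ n : ℕ in atTop, 1 / ((n : ℝ) + 1) < ε :=
      tendsto_one_div_add_atTop_nhds_zero_nat.eventually (gt_mem_nhds hε)
    have : T₀ ≤ c' + ε := by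
      refine le_of_tendsto hT₀ ?_
      filter_upwards [hU hev] with n hn
      have := hTle n
      linarith
    simp only [hεdef] at this
    linarith
  -- uniform continuity of `X` on the compact set
  have hXu := Metric.uniformContinuousOn_iff.mp
    (hKc.uniformContinuousOn_of_continuous hX.continuousOn)
  -- key uniform estimate for the difference quotients
  have hest : ∀ ε : ℝ, 0 < ε → ∃ δ > 0, ∀ t u : ℝ, |u - t| < δ → ∀ n,
      ‖x n u - x n t - (u - t) • X (x n t)‖ ≤ ε * ‖u - t‖ := by
    intro ε hε
    obtain ⟨η, hη, hXη⟩ := hXu ε hε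
    refine ⟨η / ((L : ℝ) + 1), by positivity, fun t u hu n => ?_⟩
    have hderivg : ∀ s ∈ uIcc t u, HasDerivWithinAt
        (fun s => x n s - (s - t) • X (x n t)) (X (x n s) - X (x n t)) (uIcc t u) s := by
      intro s _
      have h1 : HasDerivAt (fun s : ℝ => (s - t) • X (x n t)) (X (x n t)) s := by
        simpa using ((hasDerivAt_id s).sub_const t).smul_const (X (x n t))
      exact ((hdx n s).sub h1).hasDerivWithinAt
    have hbound : ∀ s ∈ uIcc t u, ‖X (x n s) - X (x n t)‖ ≤ ε := by
      intro s hs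
      have hsu := Set.mem_uIcc.mp hs
      have hst : |s - t| ≤ |u - t| := by
        have h1 := le_abs_self (u - t)
        have h2 := neg_abs_le (u - t)
        rw [abs_sub_le_iff]
        constructor <;> rcases hsu with ⟨h3, h4⟩ | ⟨h3, h4⟩ <;> linarith
      have hLnn : (0 : ℝ) ≤ (L : ℝ) := L.coe_nonneg
      have hdist : dist (x n s) (x n t) < η := by
        have hd := (hxc n).dist_le_mul s t
        rw [Real.dist_eq] at hd
        have : (L : ℝ) * |s - t| < η := by
          have hlt : (L : ℝ) * |s - t| ≤ (L : ℝ) * |u - t| :=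
            mul_le_mul_of_nonneg_left hst hLnn
          have : (L : ℝ) * |u - t| < η := by
            have h1 : (L : ℝ) * |u - t| ≤ ((L : ℝ) + 1) * |u - t| := by
              have := abs_nonneg (u - t); nlinarith
            have h2 : ((L : ℝ) + 1) * |u - t| < ((L : ℝ) + 1) * (η / ((L : ℝ) + 1)) :=
              mul_lt_mul_of_pos_left hu (by positivity)
            have h3 : ((L : ℝ) + 1) * (η / ((L : ℝ) + 1)) = η := by field_simp
            linarith
          linarith
        linarith
      have := hXη _ (hmem n s) _ (hmem n t) hdist
      rw [dist_eq_norm] at this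
      exact this.le
    have := (convex_uIcc t u).norm_image_sub_le_of_norm_hasDerivWithin_le hderivg hbound
      left_mem_uIcc right_mem_uIcc
    simp only [sub_self, zero_smul, sub_zero] at this
    calc ‖x n u - x n t - (u - t) • X (x n t)‖
        = ‖x n u - (u - t) • X (x n t) - x n t‖ := by rw [sub_right_comm]
      _ ≤ ε * ‖u - t‖ := this
  -- the limit curve solves the ODE
  have hyderiv : ∀ t, HasDerivAt y (X (y t)) t := by
    intro t
    rw [hasDerivAt_iff_isLittleO, Asymptotics.isLittleO_iff]
    intro ε hε
    obtain ⟨δ, hδ, hd⟩ := hest ε hε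
    filter_upwards [Metric.ball_mem_nhds t hδ] with u hu
    have hu' : |u - t| < δ := by rwa [Metric.mem_ball, Real.dist_eq] at hu
    have hb : ∀ n, ‖x n u - x n t - (u - t) • X (x n t)‖ ≤ ε * ‖u - t‖ :=
      fun n => hd t u hu' n
    have hlim : Tendsto (fun n => x n u - x n t - (u - t) • X (x n t)) (U : Filter ℕ)
        (𝓝 (y u - y t - (u - t) • X (y t))) :=
      ((hy u).sub (hy t)).sub (((hX.tendsto (y t)).comp (hy t)).const_smul (u - t))
    exact le_of_tendsto hlim.norm (Eventually.of_forall hb)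
  -- periodicity of the limit curve
  have hyper : Function.Periodic y T₀ := by
    intro t
    have h1 : Tendsto (fun n => x n (t + T₀)) (U : Filter ℕ) (𝓝 (y (t + T₀))) := hy _
    have h2 : Tendsto (fun n => x n (t + T₀)) (U : Filter ℕ) (𝓝 (y t)) := by
      rw [tendsto_iff_dist_tendsto_zero]
      have hbound : ∀ n, dist (x n (t + T₀)) (y t)
          ≤ (L : ℝ) * dist T₀ (T n) + dist (x n t) (y t) := by
        intro n
        calc dist (x n (t + T₀)) (y t)
            ≤ dist (x n (t + T₀)) (x n (t + T n)) + dist (x n (t + T n)) (y t) :=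
              dist_triangle _ _ _
          _ ≤ (L : ℝ) * dist (t + T₀) (t + T n) + dist (x n (t + T n)) (y t) :=
              add_le_add_left ((hxc n).dist_le_mul _ _) _
          _ = (L : ℝ) * dist T₀ (T n) + dist (x n t) (y t) := by
              rw [hper n t]
              congr 1
              rw [Real.dist_eq, Real.dist_eq]
              congr 1
              ring
      have hz : Tendsto (fun n => (L : ℝ) * dist T₀ (T n) + dist (x n t) (y t))
          (U : Filter ℕ) (𝓝 0) := by
        have l1 : Tendsto (fun n => dist T₀ (T n)) (U : Filter ℕ) (𝓝 0) := by
          have := Tendsto.dist (tendsto_const_nhds : Tendsto (fun _ : ℕ => T₀) (U : Filter ℕ) (𝓝 T₀)) hT₀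
          simpa using this
        have l2 := tendsto_iff_dist_tendsto_zero.mp (hy t)
        simpa using (l1.const_mul (L : ℝ)).add l2
      exact squeeze_zero (fun n => dist_nonneg) hbound hz
    exact tendsto_nhds_unique h1 h2
  -- the limit curve lies on the level set
  have hHy : ∀ t, H (y t) = h := by
    intro t
    have hlim : Tendsto (fun n => H (x n t)) (U : Filter ℕ) (𝓝 (H (y t))) :=
      (hH.tendsto _).comp (hy t)
    have hge : h ≤ H (y t) := ge_of_tendsto' hlim fun n => (hshell n t).1.le
    have hle : H (y t) ≤ h := by
      by_contra hcon
      push_neg at hcon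
      set ε := (H (y t) - h) / 2 with hεdef
      have hε : 0 < ε := by simp only [hεdef]; linarith
      have hev : ∀ᶠ n : ℕ in atTop, 1 / ((n : ℝ) + 1) < ε :=
        tendsto_one_div_add_atTop_nhds_zero_nat.eventually (gt_mem_nhds hε)
      have : H (y t) ≤ h + ε := by
        refine le_of_tendsto hlim ?_
        filter_upwards [hU hev] with n hn
        have := (hshell n t).2
        linarith
      simp only [hεdef] at this
      linarith
    exact le_antisymm hle hge
  exact ⟨T₀, y, hT₀mem.1, hT₀le, hyper, hyderiv, hHy⟩
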